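/- As r → ∞, the real part of the winding number of the image of the upper semicircle under a complex polynomial p of positive degree about 0 tends to degree(p)/2: Re(winding_number(p ∘ part_circlepath z r 0 π, 0)) → deg(p)/2 as r → ∞. -/

import Mathlib

open Complex Filter Topology Polynomial Set

/-- The winding number of a path `γ : [0,1] → ℂ` about `z`,
`(1/(2πi)) ∮_γ dw/(w - z)`. -/
noncomputable def windingNumber (γ : ℝ → ℂ) (z : ℂ) : ℂ :=
  (1 / (2 * Real.pi * Complex.I)) * ∫ t in (0:ℝ)..1, deriv γ t / (γ t - z)

/-- The straight-line path from `a` to `b`. -/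
noncomputable def linepath (a b : ℂ) : ℝ → ℂ := fun t => (1 - (t : ℂ)) * a + (t : ℂ) * b

/-- The circular-arc path `t ↦ z + r·exp(i·((1-t)·st + t·tt))`. -/
noncomputable def partCirclepath (z : ℂ) (r st tt : ℝ) : ℝ → ℂ :=
  fun t => z + (r : ℂ) * Complex.exp (Complex.I * (((1 - t) * st + t * tt : ℝ) : ℂ))

lemma tendsto_eval_div_pow {α : Type*} {l : Filter α} {z : α → ℂ}
    (hz : Tendsto (fun x => ‖z x‖) l atTop) (P : Polynomial ℂ) :
    Tendsto (fun x => P.eval (z x) / (z x) ^ P.natDegree) l (𝓝 P.leadingCoeff) := by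
  set m := P.natDegree with hm
  have hz0 : ∀ᶠ x in l, z x ≠ 0 := by
    filter_upwards [hz.eventually_ge_atTop 1] with x hx
    intro h; rw [h] at hx; simp at hx; linarith
  have hinv : Tendsto (fun x => (z x)⁻¹) l (𝓝 0) := by
    rw [tendsto_zero_iff_norm_tendsto_zero]
    exact hz.inv_tendsto_atTop.congr fun x => by simp [norm_inv]
  have key : Tendsto (fun x => ∑ i ∈ Finset.range (m + 1), P.coeff i * ((z x)⁻¹) ^ (m - i)) l
      (𝓝 (∑ i ∈ Finset.range (m + 1), P.coeff i * (0 : ℂ) ^ (m - i))) := by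
    refine tendsto_finset_sum _ fun i _ => ?_
    exact (tendsto_const_nhds.mul (hinv.pow (m - i)))
  have hsum : (∑ i ∈ Finset.range (m + 1), P.coeff i * (0 : ℂ) ^ (m - i)) = P.leadingCoeff := by
    rw [Finset.sum_eq_single m]
    · rw [Nat.sub_self, pow_zero, mul_one]; rfl
    · intro i hi hne
      have : 0 < m - i := by
        simp only [Finset.mem_range] at hi; omega
      simp [zero_pow this.ne']
    · intro h; simp at h
  rw [hsum] at key
  refine key.congr' ?_
  filter_upwards [hz0] with x hx
  rw [Polynomial.eval_eq_sum_range, Finset.sum_div]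
  refine Finset.sum_congr rfl fun i hi => ?_
  simp only [Finset.mem_range] at hi
  have hpow : (z x) ^ m = (z x) ^ i * (z x) ^ (m - i) := by
    rw [← pow_add]; congr 1; omega
  field_simp
  rw [hpow, one_div, inv_pow]; field_simp

lemma tendsto_eval_div_eval {α : Type*} {l : Filter α} {z : α → ℂ}
    (hz : Tendsto (fun x => ‖z x‖) l atTop) {q P : Polynomial ℂ} (h : q.degree < P.degree) :
    Tendsto (fun x => q.eval (z x) / P.eval (z x)) l (𝓝 0) := by
  rcases eq_or_ne q 0 with rfl | hq0
  · simpa using tendsto_const_nhds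
  have hP0 : P ≠ 0 := by
    intro hP; rw [hP, Polynomial.degree_zero] at h; exact (not_lt_bot h)
  have hdegP : 0 < P.degree := lt_of_le_of_lt (Polynomial.zero_le_degree_iff.mpr hq0) h
  have hk : q.natDegree < P.natDegree := Polynomial.natDegree_lt_natDegree hq0 h
  set k := q.natDegree
  set m := P.natDegree
  have hz0 : ∀ᶠ x in l, z x ≠ 0 := by
    filter_upwards [hz.eventually_ge_atTop 1] with x hx
    intro h; rw [h] at hx; simp at hx; linarith
  have hPev : Tendsto (fun x => ‖P.eval (z x)‖) l atTop := P.tendsto_norm_atTop hdegP hz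
  have hPne : ∀ᶠ x in l, P.eval (z x) ≠ 0 := by
    filter_upwards [hPev.eventually_ge_atTop 1] with x hx
    intro h; rw [h] at hx; simp at hx; linarith
  have hinv : Tendsto (fun x => (z x)⁻¹) l (𝓝 0) := by
    rw [tendsto_zero_iff_norm_tendsto_zero]
    exact hz.inv_tendsto_atTop.congr fun x => by simp [norm_inv]
  have hlead : P.leadingCoeff ≠ 0 := Polynomial.leadingCoeff_ne_zero.mpr hP0
  have main : Tendsto (fun x => (q.eval (z x) / (z x) ^ k) * ((z x)⁻¹) ^ (m - k) *
      (P.eval (z x) / (z x) ^ m)⁻¹) l (𝓝 (q.leadingCoeff * 0 ^ (m - k) * P.leadingCoeff⁻¹)) :=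
    ((tendsto_eval_div_pow hz q).mul (hinv.pow (m - k))).mul
      ((tendsto_eval_div_pow hz P).inv₀ hlead)
  have : q.leadingCoeff * (0:ℂ) ^ (m - k) * P.leadingCoeff⁻¹ = 0 := by
    have : 0 < m - k := by omega
    simp [zero_pow this.ne']
  rw [this] at main
  refine main.congr' ?_
  filter_upwards [hz0, hPne] with x hx hPx
  have hpow : (z x) ^ k * (z x) ^ (m - k) = (z x) ^ m := by
    rw [← pow_add]; congr 1; omega
  field_simp
  rw [← hpow, one_div, inv_pow]; field_simp

theorem Re_winding_number_poly_part_circlepath (z : ℂ) (p : Polynomial ℂ)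
    (hp : 0 < p.natDegree) :
    Tendsto (fun r : ℝ =>
        (windingNumber (fun t => p.eval (partCirclepath z r 0 Real.pi t)) 0).re)
      atTop (𝓝 ((p.natDegree : ℝ) / 2)) := by
  have hp0 : p ≠ 0 := fun h => by simp [h] at hp
  have hpdeg : 0 < p.degree := natDegree_pos_iff_degree_pos.mp hp
  set n := p.natDegree with hn
  set q : Polynomial ℂ := (X - C z) * derivative p - (n : ℂ) • p with hqdef
  -- degree of q
  have hqcoeff : ∀ m : ℕ, n ≤ m → q.coeff m = 0 := by
    intro m hm
    have hm1 : 1 ≤ m := le_trans hp hm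
    have hX : (X * derivative p).coeff m = (derivative p).coeff (m - 1) := by
      have := Polynomial.coeff_X_mul (derivative p) (m - 1)
      rwa [show m - 1 + 1 = m by omega] at this
    have h1 : ((X - C z) * derivative p).coeff m
        = (derivative p).coeff (m - 1) - z * (derivative p).coeff m := by
      rw [sub_mul, Polynomial.coeff_sub, Polynomial.coeff_C_mul, hX]
    rw [hqdef, Polynomial.coeff_sub, h1, Polynomial.coeff_smul, Polynomial.coeff_derivative,
      Polynomial.coeff_derivative, show m - 1 + 1 = m by omega, smul_eq_mul]
    have hp1 : p.coeff (m + 1) = 0 := Polynomial.coeff_eq_zero_of_natDegree_lt (by omega)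
    rw [hp1]
    have hc : ((m - 1 : ℕ) : ℂ) + 1 = (m : ℂ) := by
      push_cast [Nat.cast_sub hm1]; ring
    rw [hc]
    rcases eq_or_lt_of_le hm with heq | hlt
    · rw [← heq]; ring
    · rw [Polynomial.coeff_eq_zero_of_natDegree_lt hlt]; ring
  have hqdeg : q.degree < p.degree := by
    rw [Polynomial.degree_eq_natDegree hp0]
    exact (Polynomial.degree_lt_iff_coeff_zero q n).mpr fun m hm => hqcoeff m (by exact_mod_cast hm)
  have hqeval : ∀ w : ℂ, q.eval w = (w - z) * (derivative p).eval w - (n : ℂ) * p.eval w := by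
    intro w; simp [hqdef, smul_eq_mul]
  -- derivative of the circle path
  have hcderiv : ∀ (r t : ℝ), HasDerivAt (partCirclepath z r 0 Real.pi)
      (Complex.I * Real.pi * (partCirclepath z r 0 Real.pi t - z)) t := by
    intro r t
    have hθ : HasDerivAt (fun t : ℝ => (1 - t) * 0 + t * Real.pi) Real.pi t := by
      simpa using (hasDerivAt_id t).mul_const Real.pi
    have h2 : HasDerivAt (fun t : ℝ => Complex.I * (((1 - t) * 0 + t * Real.pi : ℝ) : ℂ))
        (Complex.I * Real.pi) t := by
      simpa using (hθ.ofReal_comp).const_mul Complex.I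
    have h4 := ((h2.cexp.const_mul (r : ℂ)).const_add z)
    convert h4 using 1
    · rfl
    · rfl
    simp only [partCirclepath, add_sub_cancel_left]
    ring
  -- derivative of p ∘ path
  have hγ : ∀ (r t : ℝ), HasDerivAt (fun t => p.eval (partCirclepath z r 0 Real.pi t))
      ((Complex.I * Real.pi * (partCirclepath z r 0 Real.pi t - z)) *
        (derivative p).eval (partCirclepath z r 0 Real.pi t)) t := by
    intro r t
    have := HasDerivAt.scomp (𝕜 := ℝ) t (p.hasDerivAt (partCirclepath z r 0 Real.pi t))
      (hcderiv r t)
    exact this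
  -- norm facts
  have hnormsub : ∀ (r t : ℝ), ‖partCirclepath z r 0 Real.pi t - z‖ = |r| := by
    intro r t
    simp [partCirclepath, add_sub_cancel_left, Complex.norm_exp]
  have hnormge : ∀ (r t : ℝ), r - ‖z‖ ≤ ‖partCirclepath z r 0 Real.pi t‖ := by
    intro r t
    have h1 : ‖partCirclepath z r 0 Real.pi t - z‖ ≤ ‖partCirclepath z r 0 Real.pi t‖ + ‖z‖ :=
      norm_sub_le _ _
    rw [hnormsub r t] at h1
    have := le_abs_self r
    linarith
  -- uniform bound
  have hcomap : Tendsto (fun w : ℂ => ‖w‖) (Filter.comap norm atTop) atTop := tendsto_comap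
  have hev : ∀ᶠ w : ℂ in Filter.comap norm atTop,
      p.eval w ≠ 0 ∧ ‖q.eval w / p.eval w‖ ≤ 1 := by
    have e1 : ∀ᶠ w : ℂ in Filter.comap norm atTop, p.eval w ≠ 0 := by
      filter_upwards [(p.tendsto_norm_atTop hpdeg hcomap).eventually_ge_atTop 1] with w hw
      intro h; rw [h] at hw; simp at hw; linarith
    have e2 : ∀ᶠ w : ℂ in Filter.comap norm atTop, ‖q.eval w / p.eval w‖ ≤ 1 := by
      have h := (tendsto_eval_div_eval hcomap hqdeg).norm
      rw [norm_zero] at h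
      exact h.eventually_le_const (by norm_num : (0:ℝ) < 1)
    filter_upwards [e1, e2] with w h1 h2 using ⟨h1, h2⟩
  rw [Filter.eventually_comap] at hev
  obtain ⟨M, hM⟩ := Filter.eventually_atTop.mp hev
  have hMw : ∀ w : ℂ, M ≤ ‖w‖ → p.eval w ≠ 0 ∧ ‖q.eval w / p.eval w‖ ≤ 1 :=
    fun w hw => hM ‖w‖ hw w rfl
  set R₀ : ℝ := max 1 (M + ‖z‖ + 1) with hR₀
  have hbig : ∀ r : ℝ, R₀ ≤ r → ∀ t : ℝ, M ≤ ‖partCirclepath z r 0 Real.pi t‖ := by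
    intro r hr t
    have h1 := hnormge r t
    have h2 : M + ‖z‖ + 1 ≤ r := le_trans (le_max_right _ _) hr
    linarith
  set F : ℝ → ℝ → ℂ := fun r t => Complex.I * Real.pi *
    (q.eval (partCirclepath z r 0 Real.pi t) / p.eval (partCirclepath z r 0 Real.pi t)) with hFdef
  have hcont : ∀ r : ℝ, R₀ ≤ r → Continuous (F r) := by
    intro r hr
    have hpc : Continuous (partCirclepath z r 0 Real.pi) := by
      unfold partCirclepath; fun_prop
    exact continuous_const.mul ((q.continuous.comp hpc).div (p.continuous.comp hpc)
      fun t => (hMw _ (hbig r hr t)).1)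
  have hwind : ∀ᶠ r in atTop,
      windingNumber (fun t => p.eval (partCirclepath z r 0 Real.pi t)) 0
        = (n : ℂ) / 2 + 1 / (2 * Real.pi * Complex.I) * ∫ t in (0:ℝ)..1, F r t := by
    filter_upwards [eventually_ge_atTop R₀] with r hr
    have hpt : ∀ t : ℝ, deriv (fun t => p.eval (partCirclepath z r 0 Real.pi t)) t
        / (p.eval (partCirclepath z r 0 Real.pi t) - 0)
        = (n : ℂ) * (Complex.I * Real.pi) + F r t := by
      intro t
      have hne : p.eval (partCirclepath z r 0 Real.pi t) ≠ 0 := (hMw _ (hbig r hr t)).1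
      rw [(hγ r t).deriv, sub_zero]
      simp only [hFdef]
      rw [hqeval]
      field_simp
      ring
    have hint : IntervalIntegrable (F r) MeasureTheory.volume 0 1 :=
      (hcont r hr).intervalIntegrable 0 1
    unfold windingNumber
    rw [intervalIntegral.integral_congr (g := fun t => (n:ℂ) * (Complex.I * Real.pi) + F r t)
      (fun t _ => hpt t)]
    rw [intervalIntegral.integral_add intervalIntegrable_const hint,
      intervalIntegral.integral_const, sub_zero, one_smul]
    have hπC : ((Real.pi : ℂ)) ≠ 0 := Complex.ofReal_ne_zero.mpr Real.pi_ne_zero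
    have hIne := Complex.I_ne_zero
    field_simp
  have hFlim : Tendsto (fun r : ℝ => ∫ t in (0:ℝ)..1, F r t) atTop (𝓝 0) := by
    have h0 : (0:ℂ) = ∫ t in (0:ℝ)..1, (0:ℂ) := by simp
    rw [h0]
    apply intervalIntegral.tendsto_integral_filter_of_dominated_convergence
      (bound := fun _ => Real.pi)
    · filter_upwards [eventually_ge_atTop R₀] with r hr
      exact (hcont r hr).aestronglyMeasurable
    · filter_upwards [eventually_ge_atTop R₀] with r hr
      refine MeasureTheory.ae_of_all _ fun t _ => ?_
      have hle := (hMw _ (hbig r hr t)).2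
      simp only [hFdef]
      rw [norm_mul, norm_mul, Complex.norm_I, one_mul, Complex.norm_real,
        Real.norm_eq_abs, abs_of_pos Real.pi_pos]
      exact mul_le_of_le_one_right Real.pi_pos.le hle
    · exact intervalIntegrable_const
    · refine MeasureTheory.ae_of_all _ fun t _ => ?_
      have hzt : Tendsto (fun r : ℝ => ‖partCirclepath z r 0 Real.pi t‖) atTop atTop :=
        tendsto_atTop_mono (fun r => hnormge r t)
          (tendsto_atTop_add_const_right _ _ tendsto_id)
      have h := (tendsto_eval_div_eval hzt hqdeg).const_mul (Complex.I * (Real.pi : ℂ))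
      simpa using h
  have hmain : Tendsto (fun r : ℝ =>
      windingNumber (fun t => p.eval (partCirclepath z r 0 Real.pi t)) 0) atTop
      (𝓝 ((n : ℂ) / 2)) := by
    have h2 := (tendsto_const_nhds (x := (n:ℂ)/2) (f := atTop (α := ℝ))).add
      (hFlim.const_mul (1 / (2 * Real.pi * Complex.I)))
    rw [mul_zero, add_zero] at h2
    exact h2.congr' (hwind.mono fun r h => h.symm)
  have hre : Tendsto (fun r : ℝ =>
      (windingNumber (fun t => p.eval (partCirclepath z r 0 Real.pi t)) 0).re) atTop
      (𝓝 (((n : ℂ)/2).re)) := (Complex.continuous_re.tendsto _).comp hmain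
  have hre2 : ((n:ℂ)/2).re = (n:ℝ)/2 := by
    rw [show ((n:ℂ)/2) = (((n:ℝ)/2 : ℝ) : ℂ) by push_cast; ring, Complex.ofReal_re]
  rwa [hre2] at hre
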